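/- Let k ≥ 2 and p ≥ 1 be integers and let q(x) = x·(k−x)^(p−1). Then q(0) = 0, q(j) ≥ 0 for all integers 1 ≤ j ≤ k, and −q'(j) + r·q(j) ≥ 0 for all integers 1 ≤ j ≤ k, where r = max((k−p)/(k−1), 0). -/

import Mathlib

open Polynomial

theorem stmt1 (k p : ℕ) (hk : 2 ≤ k) (hp : 1 ≤ p)
    (q : Polynomial ℝ) (hq : q = X * (C (k : ℝ) - X) ^ (p - 1))
    (r : ℝ) (hr : r = max (((k : ℝ) - p) / ((k : ℝ) - 1)) 0) :
    q.eval 0 = 0 ∧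
    (∀ j : ℕ, 1 ≤ j → j ≤ k → 0 ≤ q.eval (j : ℝ)) ∧
    (∀ j : ℕ, 1 ≤ j → j ≤ k → 0 ≤ -q.derivative.eval (j : ℝ) + r * q.eval (j : ℝ)) := by
  subst hq
  have hk2 : (2:ℝ) ≤ (k:ℝ) := by exact_mod_cast hk
  have hp1 : (1:ℝ) ≤ (p:ℝ) := by exact_mod_cast hp
  have hr0 : 0 ≤ r := hr ▸ le_max_right _ _
  have heval : ∀ x : ℝ, (X * (C (k:ℝ) - X) ^ (p-1)).eval x = x * ((k:ℝ) - x)^(p-1) := by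
    intro x; simp
  have hderiv : (X * (C (k:ℝ) - X) ^ (p-1)).derivative
      = (C (k:ℝ) - X)^(p-1) - C ((p:ℝ)-1) * X * (C (k:ℝ) - X)^(p-1-1) := by
    rcases Nat.exists_eq_add_of_le hp with ⟨n, hn⟩
    subst hn
    simp only [Nat.add_sub_cancel_left, derivative_mul, derivative_X, one_mul,
      derivative_pow, derivative_sub, derivative_C, zero_sub]
    push_cast
    ring
  have hdeval : ∀ x : ℝ, (X * (C (k:ℝ) - X) ^ (p-1)).derivative.eval x
      = ((k:ℝ) - x)^(p-1) - ((p:ℝ)-1) * x * ((k:ℝ) - x)^(p-1-1) := by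
    intro x; rw [hderiv]; simp
  refine ⟨by simp, ?_, ?_⟩
  · intro j h1 hjk
    have hjk' : (j:ℝ) ≤ (k:ℝ) := by exact_mod_cast hjk
    rw [heval]
    have : (0:ℝ) ≤ (k:ℝ) - j := by linarith
    positivity
  · intro j h1 hjk
    have hj1 : (1:ℝ) ≤ (j:ℝ) := by exact_mod_cast h1
    have hjk' : (j:ℝ) ≤ (k:ℝ) := by exact_mod_cast hjk
    rw [heval, hdeval]
    rcases eq_or_lt_of_le hp with hp1' | hp2
    · -- p = 1
      have hpe : p = 1 := hp1'.symm
      subst hpe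
      simp only [Nat.sub_self, pow_zero, Nat.cast_one] at *
      have hrv : r = 1 := by
        rw [hr]
        rw [max_eq_left]
        · exact div_self (ne_of_gt (by linarith))
        · apply div_nonneg <;> linarith
      rw [hrv]
      nlinarith
    · -- p ≥ 2
      have hp2' : 2 ≤ p := hp2
      set n := p - 1 with hn
      have hn1 : 1 ≤ n := by omega
      have hnn : n = (n-1) + 1 := by omega
      have hncast : ((p:ℝ) - 1) = (n:ℝ) := by
        have : (p:ℝ) = (n:ℝ) + 1 := by
          have : p = n + 1 := by omega
          rw [this]; push_cast; ring
        linarith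
      set a : ℝ := (k:ℝ) - j with ha
      have ha0 : 0 ≤ a := by rw [ha]; linarith
      have hpow : a^n = a^(n-1) * a := by
        conv_lhs => rw [hnn]
        rw [pow_succ]
      have key : 0 ≤ -a + ((p:ℝ)-1) * j + r * (j * a) := by
        rcases le_or_gt (p:ℕ) k with hpk | hkp
        · -- p ≤ k : r = (k-p)/(k-1)
          have hpk' : (p:ℝ) ≤ (k:ℝ) := by exact_mod_cast hpk
          have hd : (0:ℝ) < (k:ℝ) - 1 := by linarith
          have hrv : r = ((k:ℝ) - p) / ((k:ℝ) - 1) := by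
            rw [hr, max_eq_left]
            apply div_nonneg <;> linarith
          have hfac : 0 ≤ ((j:ℝ) - 1) * ((k:ℝ)*((k:ℝ)-1) - ((k:ℝ)-p)*j) := by
            apply mul_nonneg
            · linarith
            · nlinarith
          have heq : -a + ((p:ℝ)-1) * j + r * (j * a)
              = (((k:ℝ)-1) * (-a + ((p:ℝ)-1)*j) + ((k:ℝ)-p)*(j*a)) / ((k:ℝ)-1) := by
            rw [hrv]; field_simp
          rw [heq]
          apply div_nonneg _ hd.le
          have : ((k:ℝ)-1) * (-a + ((p:ℝ)-1)*j) + ((k:ℝ)-p)*(j*a)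
              = ((j:ℝ) - 1) * ((k:ℝ)*((k:ℝ)-1) - ((k:ℝ)-p)*j) := by
            simp only [ha]; ring
          linarith [hfac, this ▸ hfac]
        · -- p > k : enough without r term
          have hkp' : (k:ℝ) + 1 ≤ (p:ℝ) := by exact_mod_cast hkp
          have hmul : 0 ≤ ((p:ℝ)-1) * ((j:ℝ)-1) := by
            apply mul_nonneg <;> linarith
          have hra : 0 ≤ r * (j * a) := by
            apply mul_nonneg hr0; apply mul_nonneg _ ha0; linarith
          simp only [ha] at hra ⊢
          nlinarith [hra]
      rcases eq_or_lt_of_le ha0 with haz | hap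
      · -- a = 0
        rw [← haz]
        have hz : (0:ℝ)^n = 0 := by
          apply zero_pow; omega
        rw [hz]
        have h1' : 0 ≤ ((p:ℝ)-1) * j * (0:ℝ)^(n-1) := by
          apply mul_nonneg
          · apply mul_nonneg <;> linarith
          · positivity
        nlinarith [mul_nonneg hr0 (mul_nonneg (by linarith : (0:ℝ) ≤ (j:ℝ)) (le_of_eq hz.symm))]
      · -- a > 0
        have hpn1 : p - 1 - 1 = n - 1 := by omega
        rw [hpn1]
        have heq2 : -(j * a^n) * r⁻¹ = 0 ∨ True := by right; trivial
        have goal_eq : -(a^n - ((p:ℝ)-1) * j * a^(n-1)) + r * (j * a^n)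
            = a^(n-1) * (-a + ((p:ℝ)-1) * j + r * (j * a)) := by
          rw [hpow]; ring
        rw [goal_eq]
        exact mul_nonneg (pow_nonneg ha0 _) key
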